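/- Under the assumptions of the approximate calibration decomposition, if sup_{s∈S} |m(g(s),1) − m(g(s),0)| ≤ 1, then the absolute error of the label-free performance estimate is bounded by the expected absolute calibration error: |E[m(g(f(x)), y)] − Σ_{s∈S} P[f(x)=s]·(c(s)·m(g(s),1) + (1−c(s))·m(g(s),0))| ≤ Σ_{s∈S} P[f(x)=s]·|ε_s|. -/

import Mathlib

open MeasureTheory

theorem pape_estimation_error_bound
    {X S : Type*} [MeasurableSpace X] [Fintype S]
    [MeasurableSpace S] [MeasurableSingletonClass S]
    (μ : Measure (X × Bool)) [IsProbabilityMeasure μ]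
    (f : X → S) (hf : Measurable f)
    (g : S → Bool) (c : S → ℝ) (ε : S → ℝ) (m : Bool → Bool → ℝ)
    (hc01 : ∀ s, c s ∈ Set.Icc (0 : ℝ) 1)
    (hcal : ∀ s, μ {p | f p.1 = s} ≠ 0 →
      (μ {p | p.2 = true ∧ f p.1 = s}).toReal / (μ {p | f p.1 = s}).toReal
        = c s + ε s)
    (hm : ∀ s, |m (g s) true - m (g s) false| ≤ 1) :
    |(∫ p, m (g (f p.1)) p.2 ∂μ)
        - ∑ s, (μ {p | f p.1 = s}).toReal *
            (c s * m (g s) true + (1 - c s) * m (g s) false)|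
      ≤ ∑ s, (μ {p | f p.1 = s}).toReal * |ε s| := by
  classical
  set T : X × Bool → S × Bool := fun p => (f p.1, p.2) with hTdef
  have hTm : Measurable T := (hf.comp measurable_fst).prodMk measurable_snd
  set w : S → ℝ := fun s => (μ {p | f p.1 = s}).toReal with hw
  set a : S → Bool → ℝ := fun s b => (μ {p | p.2 = b ∧ f p.1 = s}).toReal with ha
  have hmap : ∀ q : S × Bool, (μ.map T) {q} = μ {p | p.2 = q.2 ∧ f p.1 = q.1} := by
    intro q
    rw [Measure.map_apply hTm (measurableSet_singleton q)]
    congr 1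
    ext p
    simp [hTdef, Prod.ext_iff, and_comm]
  have hint : ∫ p, m (g (f p.1)) p.2 ∂μ
      = ∑ s, (a s true * m (g s) true + a s false * m (g s) false) := by
    have h1 : ∫ p, m (g (f p.1)) p.2 ∂μ = ∫ q, m (g q.1) q.2 ∂(μ.map T) := by
      rw [integral_map hTm.aemeasurable
        ((measurable_of_countable _).aestronglyMeasurable)]
    rw [h1, integral_fintype .of_finite]
    rw [Fintype.sum_prod_type]
    refine Finset.sum_congr rfl fun s _ => ?_
    rw [Fintype.sum_bool]
    simp only [Measure.real, hmap, smul_eq_mul, ha]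
    try ring
  -- measurability facts
  have hWset : ∀ s, MeasurableSet {p : X × Bool | f p.1 = s} :=
    fun s => (hf.comp measurable_fst) (measurableSet_singleton s)
  have hAset : ∀ s b, MeasurableSet {p : X × Bool | p.2 = b ∧ f p.1 = s} := by
    intro s b
    have : {p : X × Bool | p.2 = b ∧ f p.1 = s}
        = {p : X × Bool | p.2 = b} ∩ {p : X × Bool | f p.1 = s} := rfl
    rw [this]
    exact (measurable_snd (measurableSet_singleton b)).inter (hWset s)
  have hsplit : ∀ s, w s = a s true + a s false := by
    intro s
    have hset : {p : X × Bool | f p.1 = s}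
        = {p : X × Bool | p.2 = true ∧ f p.1 = s} ∪ {p : X × Bool | p.2 = false ∧ f p.1 = s} := by
      ext p; by_cases h : p.2 = true <;> simp [h] <;> tauto
    have hdisj : Disjoint {p : X × Bool | p.2 = true ∧ f p.1 = s}
        {p : X × Bool | p.2 = false ∧ f p.1 = s} := by
      rw [Set.disjoint_left]; rintro p ⟨h1, _⟩ ⟨h2, _⟩; simp [h1] at h2
    have hu := measure_union (μ := μ) hdisj (hAset s false)
    rw [hw, ha]
    simp only [hset, hu]
    rw [ENNReal.toReal_add (measure_ne_top μ _) (measure_ne_top μ _)]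
  have key : ∀ s, |(a s true * m (g s) true + a s false * m (g s) false)
      - w s * (c s * m (g s) true + (1 - c s) * m (g s) false)|
      ≤ w s * |ε s| := by
    intro s
    by_cases h0 : μ {p | f p.1 = s} = 0
    · have hw0 : w s = 0 := by rw [hw]; simp [h0]
      have ha1 : a s true = 0 := by
        rw [ha]
        simp only
        rw [measure_mono_null (fun p hp => hp.2) h0]
        simp
      have ha0 : a s false = 0 := by
        rw [ha]
        simp only
        rw [measure_mono_null (fun p hp => hp.2) h0]
        simp
      simp [hw0, ha1, ha0]
    · have hwne : w s ≠ 0 := by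
        rw [hw]
        exact ENNReal.toReal_ne_zero.2 ⟨h0, measure_ne_top μ _⟩
      have ha1 : a s true = w s * (c s + ε s) := by
        have h := hcal s h0
        rw [div_eq_iff hwne] at h
        rw [ha]; simp only; linarith
      have ha0 : a s false = w s - a s true := by
        have := hsplit s; linarith
      have hwpos : 0 ≤ w s := ENNReal.toReal_nonneg
      have heq : (a s true * m (g s) true + a s false * m (g s) false)
          - w s * (c s * m (g s) true + (1 - c s) * m (g s) false)
          = (w s * ε s) * (m (g s) true - m (g s) false) := by
        rw [ha0, ha1]; ring
      rw [heq, abs_mul, abs_mul, abs_of_nonneg hwpos]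
      calc w s * |ε s| * |m (g s) true - m (g s) false|
          ≤ w s * |ε s| * 1 := by
            apply mul_le_mul_of_nonneg_left (hm s)
            positivity
        _ = w s * |ε s| := by ring
  rw [hint, ← Finset.sum_sub_distrib]
  calc |∑ s, ((a s true * m (g s) true + a s false * m (g s) false)
        - w s * (c s * m (g s) true + (1 - c s) * m (g s) false))|
      ≤ ∑ s, |(a s true * m (g s) true + a s false * m (g s) false)
        - w s * (c s * m (g s) true + (1 - c s) * m (g s) false)| :=
        Finset.abs_sum_le_sum_abs _ _
    _ ≤ ∑ s, w s * |ε s| := Finset.sum_le_sum fun s _ => key s
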